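/- Let t: U → ℝ be smooth on an open U ⊂ ℝ⁵ and define the vector fields ξ₄ = −(x¹+3tx²)∂₀ − t³∂₁ + t²∂₂ − t∂₃ + ∂₄ and ξ₃ = 3x²∂₀ + 3t²∂₁ − 2t∂₂ + ∂₃ (where ∂ᵢ = ∂/∂xⁱ). Then the Lie bracket [ξ₄, ξ₃] lies in span{ξ₄, ξ₃} at every point of U (i.e., the rank-2 distribution D = span{ξ₄, ξ₃} is integrable) if and only if J := (x¹+3tx²)t_{x⁰} + t³t_{x¹} − t²t_{x²} + t·t_{x³} − t_{x⁴} = 0 on U, i.e., ξ₄(t) = 0. -/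

import Mathlib

/-- The Lie bracket of vector fields on `ℝ⁵` written in coordinates. -/
noncomputable def lieB (X Y : (Fin 5 → ℝ) → Fin 5 → ℝ) (x : Fin 5 → ℝ) : Fin 5 → ℝ :=
  fun i => fderiv ℝ (fun y => Y y i) x (X x) - fderiv ℝ (fun y => X y i) x (Y x)

/-- The vector field `ξ₄ = −(x¹+3tx²)∂₀ − t³∂₁ + t²∂₂ − t∂₃ + ∂₄`. -/
def xi4 (t : (Fin 5 → ℝ) → ℝ) : (Fin 5 → ℝ) → Fin 5 → ℝ :=
  fun x => ![-(x 1 + 3 * t x * x 2), -(t x) ^ 3, (t x) ^ 2, -(t x), 1]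

/-- The vector field `ξ₃ = 3x²∂₀ + 3t²∂₁ − 2t∂₂ + ∂₃`. -/
def xi3 (t : (Fin 5 → ℝ) → ℝ) : (Fin 5 → ℝ) → Fin 5 → ℝ :=
  fun x => ![3 * x 2, 3 * (t x) ^ 2, -(2 * t x), 1, 0]

/-- The relative invariant `J = (x¹+3tx²)t_{x⁰} + t³t_{x¹} − t²t_{x²} + t·t_{x³} − t_{x⁴}`. -/
noncomputable def Jinv (t : (Fin 5 → ℝ) → ℝ) (x : Fin 5 → ℝ) : ℝ :=
  (x 1 + 3 * t x * x 2) * fderiv ℝ t x (Pi.single (0 : Fin 5) 1) +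
    (t x) ^ 3 * fderiv ℝ t x (Pi.single (1 : Fin 5) 1) -
    (t x) ^ 2 * fderiv ℝ t x (Pi.single (2 : Fin 5) 1) +
    t x * fderiv ℝ t x (Pi.single (3 : Fin 5) 1) -
    fderiv ℝ t x (Pi.single (4 : Fin 5) 1)

lemma fderiv_pi_apply (t : (Fin 5 → ℝ) → ℝ) (x v : Fin 5 → ℝ) :
    fderiv ℝ t x v = ∑ i, v i * fderiv ℝ t x (Pi.single i 1) := by
  have hv : v = ∑ i : Fin 5, v i • (Pi.single i 1 : Fin 5 → ℝ) := by
    funext j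
    simp [Finset.sum_apply, Pi.single_apply]
  conv_lhs => rw [hv]
  rw [map_sum]
  simp [smul_eq_mul]

lemma Jinv_eq (t : (Fin 5 → ℝ) → ℝ) (x : Fin 5 → ℝ) :
    Jinv t x = -(fderiv ℝ t x (xi4 t x)) := by
  rw [fderiv_pi_apply]
  simp [Jinv, xi4, Fin.sum_univ_five]
  ring

lemma bracket_eq (t : (Fin 5 → ℝ) → ℝ) (x : Fin 5 → ℝ)
    (ht' : DifferentiableAt ℝ t x) :
    lieB (xi4 t) (xi3 t) x =
      ![3 * x 2 * (fderiv ℝ t x (xi3 t x)),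
        6 * t x * (fderiv ℝ t x (xi4 t x)) + 3 * (t x) ^ 2 * (fderiv ℝ t x (xi3 t x)),
        -(2 * fderiv ℝ t x (xi4 t x)) - 2 * t x * (fderiv ℝ t x (xi3 t x)),
        fderiv ℝ t x (xi3 t x), 0] := by
  have hφ : HasFDerivAt t (fderiv ℝ t x) x := ht'.hasFDerivAt
  set φ := fderiv ℝ t x with hφdef
  have hproj : ∀ (j : Fin 5), HasFDerivAt (fun y : Fin 5 → ℝ => y j)
      (ContinuousLinearMap.proj j : (Fin 5 → ℝ) →L[ℝ] ℝ) x := fun j =>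
    (ContinuousLinearMap.proj j : (Fin 5 → ℝ) →L[ℝ] ℝ).hasFDerivAt
  have hsq : HasFDerivAt (fun y : Fin 5 → ℝ => (t y) ^ 2) ((2 * t x) • φ) x := by
    have h := hφ.mul hφ
    have e : (2 * t x) • φ = t x • φ + t x • φ := by rw [two_mul, add_smul]
    rw [e]
    simpa [pow_two] using (show HasFDerivAt (fun y => t y * t y) _ x from h)
  have hcube : HasFDerivAt (fun y : Fin 5 → ℝ => (t y) ^ 3) ((3 * t x ^ 2) • φ) x := by
    have h := hsq.mul hφ
    have e : (3 * t x ^ 2) • φ = t x ^ 2 • φ + t x • (2 * t x) • φ := by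
      rw [smul_smul, ← add_smul]; ring_nf
    rw [e]
    simpa [pow_succ] using (show HasFDerivAt (fun y => t y ^ 2 * t y) _ x from h)
  have hY0 : HasFDerivAt (fun y : Fin 5 → ℝ => 3 * y 2)
      ((3:ℝ) • (ContinuousLinearMap.proj 2 : (Fin 5 → ℝ) →L[ℝ] ℝ)) x :=
    (hproj 2).const_mul 3
  have hY1 : HasFDerivAt (fun y : Fin 5 → ℝ => 3 * (t y) ^ 2)
      ((3:ℝ) • ((2 * t x) • φ)) x := hsq.const_mul 3
  have hY2 : HasFDerivAt (fun y : Fin 5 → ℝ => -(2 * t y)) (-((2:ℝ) • φ)) x :=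
    (hφ.const_mul 2).neg
  have hX0 : HasFDerivAt (fun y : Fin 5 → ℝ => -(y 1 + 3 * t y * y 2))
      (-((ContinuousLinearMap.proj 1 : (Fin 5 → ℝ) →L[ℝ] ℝ) +
        ((3 * t x) • (ContinuousLinearMap.proj 2 : (Fin 5 → ℝ) →L[ℝ] ℝ) +
          x 2 • ((3:ℝ) • φ)))) x :=
    ((hproj 1).add (((hφ.const_mul 3).mul (hproj 2)))).neg
  have hX1 : HasFDerivAt (fun y : Fin 5 → ℝ => -(t y) ^ 3) (-((3 * t x ^ 2) • φ)) x :=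
    hcube.neg
  have hX3 : HasFDerivAt (fun y : Fin 5 → ℝ => -(t y)) (-φ) x := hφ.neg
  funext i
  fin_cases i
  · show fderiv ℝ (fun y => 3 * y 2) x (xi4 t x)
        - fderiv ℝ (fun y => -(y 1 + 3 * t y * y 2)) x (xi3 t x) = 3 * x 2 * φ (xi3 t x)
    rw [hY0.fderiv, hX0.fderiv]
    simp [xi3, xi4]
    ring
  · show fderiv ℝ (fun y => 3 * (t y) ^ 2) x (xi4 t x)
        - fderiv ℝ (fun y => -(t y) ^ 3) x (xi3 t x)
        = 6 * t x * φ (xi4 t x) + 3 * (t x) ^ 2 * φ (xi3 t x)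
    rw [hY1.fderiv, hX1.fderiv]
    simp
    try ring
  · show fderiv ℝ (fun y => -(2 * t y)) x (xi4 t x)
        - fderiv ℝ (fun y => (t y) ^ 2) x (xi3 t x)
        = -(2 * φ (xi4 t x)) - 2 * t x * φ (xi3 t x)
    rw [hY2.fderiv, hsq.fderiv]
    simp
    try ring
  · show fderiv ℝ (fun _ : Fin 5 → ℝ => (1:ℝ)) x (xi4 t x)
        - fderiv ℝ (fun y => -(t y)) x (xi3 t x) = φ (xi3 t x)
    rw [fderiv_fun_const, hX3.fderiv]
    simp
  · show fderiv ℝ (fun _ : Fin 5 → ℝ => (0:ℝ)) x (xi4 t x)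
        - fderiv ℝ (fun _ : Fin 5 → ℝ => (1:ℝ)) x (xi3 t x) = 0
    rw [fderiv_fun_const, fderiv_fun_const]
    simp

/-- The distribution `span{ξ₄, ξ₃}` is integrable (the bracket `[ξ₄,ξ₃]` lies in the span
at every point) if and only if `J = 0` on `U`. -/
theorem integrability_iff_J_vanishes
    (U : Set (Fin 5 → ℝ)) (hU : IsOpen U) (t : (Fin 5 → ℝ) → ℝ)
    (ht : ContDiffOn ℝ (⊤ : ℕ∞) t U) :
    (∀ x ∈ U, ∃ a b : ℝ, lieB (xi4 t) (xi3 t) x = a • xi4 t x + b • xi3 t x) ↔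
    (∀ x ∈ U, Jinv t x = 0) := by
  constructor
  · intro h x hx
    have ht' : DifferentiableAt ℝ t x :=
      (ht.differentiableOn (by simp)).differentiableAt (hU.mem_nhds hx)
    obtain ⟨a, b, hab⟩ := h x hx
    rw [bracket_eq t x ht'] at hab
    set A := fderiv ℝ t x (xi4 t x) with hAdef
    set B := fderiv ℝ t x (xi3 t x) with hBdef
    have h4 := congrFun hab 4
    have h3 := congrFun hab 3
    have h2 := congrFun hab 2
    simp only [Matrix.cons_val_four, Matrix.cons_val_three, Matrix.cons_val_two,
      Matrix.tail_cons, Matrix.head_cons, Matrix.cons_val_fin_one, Pi.add_apply,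
      Pi.smul_apply, smul_eq_mul, xi4, xi3, Matrix.cons_val_zero, Matrix.cons_val_one,
      mul_one, mul_zero, add_zero] at h4 h3 h2
    have ha : a = 0 := by linarith
    subst ha
    have hb : b = B := by linarith
    rw [hb] at h2
    rw [Jinv_eq, ← hAdef]
    linarith
  · intro h x hx
    have ht' : DifferentiableAt ℝ t x :=
      (ht.differentiableOn (by simp)).differentiableAt (hU.mem_nhds hx)
    refine ⟨0, fderiv ℝ t x (xi3 t x), ?_⟩
    rw [bracket_eq t x ht']
    set A := fderiv ℝ t x (xi4 t x) with hAdef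
    set B := fderiv ℝ t x (xi3 t x) with hBdef
    have hA : A = 0 := by
      have hJ := h x hx
      rw [Jinv_eq, ← hAdef] at hJ
      linarith
    funext i
    fin_cases i <;> simp [xi3, xi4, hA] <;> ring
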